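/- Let F(x) ∈ 𝓞[x] be a monic irreducible polynomial with root θ ∈ K̄, of depth r, with Okutsu frame [F_1, …, F_r] and invariants m_i, μ_i. Let h(x) ∈ 𝓞[x] be a monic irreducible polynomial of degree m, and let δ_F(h) = max{ v(θ − β) : β ∈ K̄ a root of h(x) }. Then, for any 1 ≤ i ≤ r: (i) if δ_F(h) < μ_i then v(h(θ)) < (m/m_i) · v(F_i(θ)); (ii) if δ_F(h) = μ_i then v(h(θ)) = (m/m_i) · v(F_i(θ)); (iii) if δ_F(h) > μ_i then v(h(θ)) > (m/m_i) · v(F_i(θ)). -/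

import Mathlib

open Polynomial

noncomputable section

/-- A local field `K` of characteristic zero, presented through the canonical extension `v`
of its normalized discrete valuation (additively written, `v(K*) = ℤ`) to a fixed algebraic
closure of `K`.  The axioms state that `v` is an additive valuation on the algebraic closure,
that its restriction to `K` is a surjective discrete valuation onto `ℤ` (plus `⊤` at `0`),
that it is invariant under `K`-automorphisms (a property of the canonical extension), that
`K` is complete and that its residue field is finite. -/
structure OkutsuSetup (K : Type) [Field K] [CharZero K] : Type where
  v : AlgebraicClosure K → WithTop ℚ
  v_eq_top_iff : ∀ x, v x = ⊤ ↔ x = 0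
  v_mul : ∀ x y, v (x * y) = v x + v y
  v_min_le_add : ∀ x y, min (v x) (v y) ≤ v (x + y)
  v_neg : ∀ x, v (-x) = v x
  v_one : v 1 = 0
  v_base_int : ∀ x : K, x ≠ 0 →
    ∃ k : ℤ, v (algebraMap K (AlgebraicClosure K) x) = ((k : ℚ) : WithTop ℚ)
  v_base_one : ∃ x : K, v (algebraMap K (AlgebraicClosure K) x) = ((1 : ℚ) : WithTop ℚ)
  v_aut_invariant : ∀ (M : IntermediateField K (AlgebraicClosure K)) (σ : ↥M ≃ₐ[K] ↥M)
    (x : ↥M), v ((σ x : ↥M) : AlgebraicClosure K) = v ((x : ↥M) : AlgebraicClosure K)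
  complete : ∀ a : ℕ → K,
    (∀ N : ℚ, ∃ M : ℕ, ∀ p q : ℕ, M ≤ p → M ≤ q →
      ((N : ℚ) : WithTop ℚ) < v (algebraMap K (AlgebraicClosure K) (a p - a q))) →
    ∃ b : K, ∀ N : ℚ, ∃ M : ℕ, ∀ p : ℕ, M ≤ p →
      ((N : ℚ) : WithTop ℚ) < v (algebraMap K (AlgebraicClosure K) (a p - b))
  finite_residue : ∃ T : Finset K, ∀ x : K,
    0 ≤ v (algebraMap K (AlgebraicClosure K) x) →
    ∃ y ∈ T, 0 < v (algebraMap K (AlgebraicClosure K) (x - y))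

namespace OkutsuSetup

variable {K : Type} [Field K] [CharZero K]

/-- The valuation of `K` itself. -/
def vK (S : OkutsuSetup K) (x : K) : WithTop ℚ :=
  S.v (algebraMap K (AlgebraicClosure K) x)

/-- The ring of integers `𝓞` of `K`. -/
def integers (S : OkutsuSetup K) : Subring K where
  carrier := {x : K | 0 ≤ S.vK x}
  zero_mem' := by
    show (0 : WithTop ℚ) ≤ S.vK 0
    unfold vK
    rw [map_zero, (S.v_eq_top_iff 0).mpr rfl]
    exact le_top
  one_mem' := by
    show (0 : WithTop ℚ) ≤ S.vK 1
    unfold vK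
    rw [map_one, S.v_one]
  add_mem' := by
    intro a b ha hb
    show (0 : WithTop ℚ) ≤ S.vK (a + b)
    unfold vK
    rw [map_add]
    exact le_trans (le_min ha hb) (S.v_min_le_add _ _)
  mul_mem' := by
    intro a b ha hb
    show (0 : WithTop ℚ) ≤ S.vK (a * b)
    unfold vK
    rw [map_mul, S.v_mul]
    exact add_nonneg ha hb
  neg_mem' := by
    intro a ha
    show (0 : WithTop ℚ) ≤ S.vK (-a)
    unfold vK
    rw [map_neg, S.v_neg]
    exact ha

/-- The maximal ideal `𝔪` of the ring of integers of `K`. -/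
def maximalIdeal (S : OkutsuSetup K) : Ideal S.integers where
  carrier := {x : S.integers | 0 < S.vK (x : K)}
  zero_mem' := by
    show (0 : WithTop ℚ) < S.vK ((0 : S.integers) : K)
    have h0 : ((0 : S.integers) : K) = (0 : K) := rfl
    rw [h0]
    unfold vK
    rw [map_zero, (S.v_eq_top_iff 0).mpr rfl]
    exact WithTop.coe_lt_top 0
  add_mem' := by
    intro a b ha hb
    show (0 : WithTop ℚ) < S.vK ((a : K) + (b : K))
    refine lt_of_lt_of_le (lt_min ha hb) ?_
    unfold vK
    rw [map_add]
    exact S.v_min_le_add _ _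
  smul_mem' := by
    intro c x hx
    show (0 : WithTop ℚ) < S.vK ((c : K) * (x : K))
    unfold vK
    rw [map_mul, S.v_mul]
    calc (0 : WithTop ℚ) < S.v (algebraMap K (AlgebraicClosure K) (x : K)) := hx
    _ ≤ _ + _ := le_add_of_nonneg_left c.2

/-- The residue field `𝓞/𝔪` of `K`. -/
abbrev Residue (S : OkutsuSetup K) : Type :=
  S.integers ⧸ S.maximalIdeal

/-- The residue characteristic of `K`. -/
def resChar (S : OkutsuSetup K) : ℕ :=
  ringChar S.Residue

/-- Reduction of a polynomial with integer coefficients modulo `𝔪`. -/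
def reduce (S : OkutsuSetup K) (F : Polynomial S.integers) : Polynomial S.Residue :=
  F.map (Ideal.Quotient.mk S.maximalIdeal)

/-- Evaluation of a polynomial with coefficients in `𝓞` at a point of the algebraic
closure of `K`. -/
def evalK (S : OkutsuSetup K) (F : Polynomial S.integers) (θ : AlgebraicClosure K) :
    AlgebraicClosure K :=
  Polynomial.aeval θ (F.map S.integers.subtype)

/-- `v(g)` for a polynomial `g`: the minimum of the valuations of its coefficients. -/
def vPoly (S : OkutsuSetup K) (g : Polynomial S.integers) : WithTop ℚ :=
  (Finset.range (g.natDegree + 1)).inf fun i => S.vK ((g.coeff i : K))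

/-- The ramification index `e(E/K)` of a finite subextension `E` of `K̄/K`: the least
positive integer `e` such that all values of `v` on `E*` lie in `(1/e)ℤ`. -/
def ramIdx (S : OkutsuSetup K) (E : IntermediateField K (AlgebraicClosure K)) : ℕ :=
  sInf {e : ℕ | 0 < e ∧ ∀ x ∈ E, x ≠ (0 : AlgebraicClosure K) →
    ∃ k : ℤ, S.v x = (((k : ℚ) / (e : ℚ) : ℚ) : WithTop ℚ)}

/-- The residual degree `f(E/K)` of a finite subextension `E` of `K̄/K`; since `K` is a
complete discretely valued field, `[E : K] = e(E/K)·f(E/K)`. -/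
def resDeg (S : OkutsuSetup K) (E : IntermediateField K (AlgebraicClosure K)) : ℕ :=
  Module.finrank K E / S.ramIdx E

/-- A subextension `E/K` is tamely ramified when its ramification index is prime to the
residue characteristic of `K`. -/
def IsTame (S : OkutsuSetup K) (E : IntermediateField K (AlgebraicClosure K)) : Prop :=
  Nat.Coprime (S.ramIdx E) S.resChar

/-- The Okutsu invariants `m_0 = 1 ≤ m_1 < ⋯ < m_r < m_{r+1} = n` and
`μ_0 = 0 < μ_1 < ⋯ < μ_r < μ_{r+1} = ∞` of a monic irreducible polynomial of degree `n`
with root `θ`:  `m i` is the least `[K(η):K]` over `η` with `v(θ-η) > μ (i-1)`, and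
`μ i` is the greatest value of `v(θ-η)` over `η` with `[K(η):K] = m i`.
`r` is the depth: the number of indices `i ≥ 1` with `m i < n`. -/
structure OkutsuData (S : OkutsuSetup K) (θ : AlgebraicClosure K) (n : ℕ) : Type where
  r : ℕ
  m : ℕ → ℕ
  μ : ℕ → WithTop ℚ
  m_zero : m 0 = 1
  mu_zero : μ 0 = 0
  m_isLeast : ∀ i, 1 ≤ i → i ≤ r + 1 →
    IsLeast {d : ℕ | ∃ η : AlgebraicClosure K,
      (minpoly K η).natDegree = d ∧ μ (i - 1) < S.v (θ - η)} (m i)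
  mu_isGreatest : ∀ i, 1 ≤ i → i ≤ r + 1 →
    IsGreatest {c : WithTop ℚ | ∃ η : AlgebraicClosure K,
      (minpoly K η).natDegree = m i ∧ S.v (θ - η) = c} (μ i)
  m_lt_n : ∀ i, 1 ≤ i → i ≤ r → m i < n
  m_last : m (r + 1) = n

/-- `[F_1, …, F_r]` is an Okutsu frame of the monic irreducible polynomial with root `θ`
and Okutsu invariants `D`: for each `1 ≤ i ≤ r`, `F_i` is the minimal polynomial of some
`α_i ∈ K̄` with `[K(α_i):K] = m_i` and `v(θ - α_i) = μ_i`. -/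
def IsFrame (S : OkutsuSetup K) {θ : AlgebraicClosure K} {n : ℕ} (D : OkutsuData S θ n)
    (Fr : ℕ → Polynomial S.integers) : Prop :=
  ∀ i, 1 ≤ i → i ≤ D.r → ∃ α : AlgebraicClosure K,
    (minpoly K α).natDegree = D.m i ∧ S.v (θ - α) = D.μ i ∧
      (Fr i).map S.integers.subtype = minpoly K α

/-- `φ` is a Montes approximation to the monic irreducible polynomial `F`:  a monic
irreducible polynomial of the same degree `n` having a root `α` with `v(θ - α) > μ_r`,
where `θ` is a root of `F`. -/
def IsMontesApprox (S : OkutsuSetup K) (F φ : Polynomial S.integers) : Prop :=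
  φ.Monic ∧ Irreducible (φ.map S.integers.subtype) ∧ φ.natDegree = F.natDegree ∧
    ∃ θ : AlgebraicClosure K, S.evalK F θ = 0 ∧
      ∃ D : OkutsuData S θ F.natDegree, ∃ α : AlgebraicClosure K,
        S.evalK φ α = 0 ∧ D.μ D.r < S.v (θ - α)

end OkutsuSetup

section OkutsuAux

open OkutsuSetup

variable {K : Type} [Field K] [CharZero K] (S : OkutsuSetup K)

lemma okutsu_aux_v_zero : S.v 0 = ⊤ := (S.v_eq_top_iff 0).mpr rfl

lemma okutsu_aux_v_ne_top {x : AlgebraicClosure K} (hx : x ≠ 0) : S.v x ≠ ⊤ :=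
  fun h => hx ((S.v_eq_top_iff x).mp h)

lemma okutsu_aux_v_sub_symm (x y : AlgebraicClosure K) : S.v (x - y) = S.v (y - x) := by
  rw [← S.v_neg (y - x), neg_sub]

lemma okutsu_aux_v_add_eq (x y : AlgebraicClosure K) (hlt : S.v x < S.v y) :
    S.v (x + y) = S.v x := by
  have h1 : S.v x ≤ S.v (x + y) := by
    have := S.v_min_le_add x y
    rwa [min_eq_left hlt.le] at this
  refine le_antisymm ?_ h1
  by_contra hc
  push_neg at hc
  have h2 : min (S.v (x + y)) (S.v (-y)) ≤ S.v x := by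
    have := S.v_min_le_add (x + y) (-y)
    simpa using this
  rw [S.v_neg] at h2
  exact absurd h2 (not_le.mpr (lt_min hc hlt))

lemma okutsu_aux_triangle (x y z : AlgebraicClosure K) :
    min (S.v (x - y)) (S.v (y - z)) ≤ S.v (x - z) := by
  have := S.v_min_le_add (x - y) (y - z)
  simpa [sub_add_sub_cancel] using this

lemma okutsu_aux_v_aut (σ : AlgebraicClosure K ≃ₐ[K] AlgebraicClosure K)
    (x : AlgebraicClosure K) : S.v (σ x) = S.v x := by
  have := S.v_aut_invariant ⊤
    ((IntermediateField.topEquiv.trans σ).trans IntermediateField.topEquiv.symm)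
    ⟨x, trivial⟩
  have e : IntermediateField.topEquiv (⟨x, trivial⟩ : (⊤ : IntermediateField K (AlgebraicClosure K))) = x := rfl
  simpa [e] using this

lemma okutsu_aux_v_prod (s : Multiset (AlgebraicClosure K)) :
    S.v s.prod = (s.map S.v).sum := by
  induction s using Multiset.induction_on with
  | empty => simpa using S.v_one
  | cons a t ih => simp [S.v_mul, ih]

lemma okutsu_aux_sum_le {α : Type} (s : Multiset α) (f g : α → WithTop ℚ)
    (h : ∀ x ∈ s, f x ≤ g x) : (s.map f).sum ≤ (s.map g).sum := by
  induction s using Multiset.induction_on with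
  | empty => simp
  | cons a t ih =>
    simp only [Multiset.map_cons, Multiset.sum_cons]
    exact add_le_add (h a (Multiset.mem_cons_self a t))
      (ih fun x hx => h x (Multiset.mem_cons_of_mem hx))

lemma okutsu_aux_sum_ne_top {α : Type} (s : Multiset α) (f : α → WithTop ℚ)
    (h : ∀ x ∈ s, f x ≠ ⊤) : (s.map f).sum ≠ ⊤ := by
  induction s using Multiset.induction_on with
  | empty => simp
  | cons a t ih =>
    simp only [Multiset.map_cons, Multiset.sum_cons]
    exact WithTop.add_ne_top.mpr ⟨h a (Multiset.mem_cons_self a t),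
      ih fun x hx => h x (Multiset.mem_cons_of_mem hx)⟩

lemma okutsu_aux_sum_lt {α : Type} [DecidableEq α] (s : Multiset α) (f g : α → WithTop ℚ)
    (x₀ : α) (hx₀ : x₀ ∈ s) (h0 : f x₀ < g x₀)
    (hle : ∀ x ∈ s, f x ≤ g x) (hfin : ∀ x ∈ s, f x ≠ ⊤) :
    (s.map f).sum < (s.map g).sum := by
  obtain ⟨t, rfl⟩ := Multiset.exists_cons_of_mem hx₀
  simp only [Multiset.map_cons, Multiset.sum_cons]
  exact WithTop.add_lt_add_of_lt_of_le
    (okutsu_aux_sum_ne_top t f fun x hx => hfin x (Multiset.mem_cons_of_mem hx)) h0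
    (okutsu_aux_sum_le t f g fun x hx => hle x (Multiset.mem_cons_of_mem hx))

lemma okutsu_aux_sum_swap {α β : Type} (s : Multiset α) (t : Multiset β)
    (F : α → β → WithTop ℚ) :
    (s.map fun x => (t.map (F x)).sum).sum = (t.map fun y => (s.map fun x => F x y).sum).sum := by
  induction s using Multiset.induction_on with
  | empty => simp
  | cons a u ih =>
    simp only [Multiset.map_cons, Multiset.sum_cons, ih, ← Multiset.sum_map_add]

lemma okutsu_aux_nsmul (k : ℕ) (q : ℚ) :
    (k • ((q : ℚ) : WithTop ℚ)) = ((k • q : ℚ) : WithTop ℚ) := by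
  induction k with
  | zero => simp
  | succ k ih => rw [succ_nsmul, succ_nsmul, ih, ← WithTop.coe_add]

end OkutsuAux

section OkutsuAux2

open OkutsuSetup Polynomial

variable {K : Type} [Field K] [CharZero K] (S : OkutsuSetup K)

lemma okutsu_aux_eval_eq (gK : Polynomial K) (hmon : gK.Monic) (x : AlgebraicClosure K) :
    S.v (Polynomial.aeval x gK) =
      (((gK.map (algebraMap K (AlgebraicClosure K))).roots).map fun ρ => S.v (x - ρ)).sum := by
  set G := gK.map (algebraMap K (AlgebraicClosure K)) with hG
  have hGmon : G.Monic := hmon.map _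
  have hsplit : G.Splits := IsAlgClosed.splits G
  have hfac := hsplit.eq_prod_roots_of_monic hGmon
  have hx : Polynomial.aeval x gK = Polynomial.eval x G := by
    rw [Polynomial.aeval_def, hG, Polynomial.eval_map]
  rw [hx]
  conv_lhs => rw [hfac]
  rw [Polynomial.eval_multiset_prod, Multiset.map_map, okutsu_aux_v_prod, Multiset.map_map]
  congr 1
  apply Multiset.map_congr rfl
  intro ρ _
  simp

lemma okutsu_aux_roots_card (gK : Polynomial K) (hmon : gK.Monic) :
    Multiset.card ((gK.map (algebraMap K (AlgebraicClosure K))).roots) = gK.natDegree := by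
  have h1 : (gK.map (algebraMap K (AlgebraicClosure K))).roots.card
      = (gK.map (algebraMap K (AlgebraicClosure K))).natDegree :=
    Polynomial.splits_iff_card_roots.mp (IsAlgClosed.splits _)
  rw [h1, hmon.natDegree_map]

lemma okutsu_aux_root_aeval (gK : Polynomial K) {x : AlgebraicClosure K}
    (hx : x ∈ (gK.map (algebraMap K (AlgebraicClosure K))).roots) :
    Polynomial.aeval x gK = 0 := by
  have := (Polynomial.mem_roots'.mp hx).2
  rwa [Polynomial.IsRoot, Polynomial.eval_map, ← Polynomial.aeval_def] at this

lemma okutsu_aux_conj (x y : AlgebraicClosure K)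
    (hmin : Polynomial.aeval y (minpoly K x) = 0) :
    ∃ σ : AlgebraicClosure K ≃ₐ[K] AlgebraicClosure K, σ x = y :=
  minpoly.exists_algEquiv_of_root' (Algebra.IsAlgebraic.isAlgebraic x) hmin

lemma okutsu_aux_mem_roots (gK : Polynomial K) (hmon : gK.Monic) (x : AlgebraicClosure K)
    (hx : Polynomial.aeval x gK = 0) :
    x ∈ (gK.map (algebraMap K (AlgebraicClosure K))).roots := by
  rw [Polynomial.mem_roots']
  refine ⟨(hmon.map _).ne_zero, ?_⟩
  rw [Polynomial.IsRoot, Polynomial.eval_map, ← Polynomial.aeval_def]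
  exact hx

end OkutsuAux2

section OkutsuAux3

open OkutsuSetup Polynomial

variable {K : Type} [Field K] [CharZero K] (S : OkutsuSetup K)

set_option linter.unusedSectionVars false

lemma okutsu_aux_res (FK : Polynomial K) (hFKmon : FK.Monic) (θ : AlgebraicClosure K)
    (hminθ : minpoly K θ = FK)
    (gK : Polynomial K) (hgmon : gK.Monic) (hgirr : Irreducible gK)
    (γ : AlgebraicClosure K) (hγ : Polynomial.aeval γ gK = 0) :
    FK.natDegree • S.v (Polynomial.aeval θ gK)
      = gK.natDegree • S.v (Polynomial.aeval γ FK) := by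
  set R := (FK.map (algebraMap K (AlgebraicClosure K))).roots with hR
  set Rg := (gK.map (algebraMap K (AlgebraicClosure K))).roots with hRg
  have hminγ : minpoly K γ = gK := (minpoly.eq_of_irreducible_of_monic hgirr hγ hgmon).symm
  have hconst1 : ∀ θ' ∈ R, S.v (Polynomial.aeval θ' gK) = S.v (Polynomial.aeval θ gK) := by
    intro θ' hθ'
    obtain ⟨σ, hσ⟩ := okutsu_aux_conj θ θ'
      (by rw [hminθ]; exact okutsu_aux_root_aeval FK hθ')
    rw [← hσ, Polynomial.aeval_algHom_apply σ θ gK, okutsu_aux_v_aut]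
  have hconst2 : ∀ ρ ∈ Rg, S.v (Polynomial.aeval ρ FK) = S.v (Polynomial.aeval γ FK) := by
    intro ρ hρ
    obtain ⟨σ, hσ⟩ := okutsu_aux_conj γ ρ
      (by rw [hminγ]; exact okutsu_aux_root_aeval gK hρ)
    rw [← hσ, Polynomial.aeval_algHom_apply σ γ FK, okutsu_aux_v_aut]
  have e1 : (R.map fun θ' => S.v (Polynomial.aeval θ' gK)).sum
      = FK.natDegree • S.v (Polynomial.aeval θ gK) := by
    rw [Multiset.map_congr rfl hconst1, Multiset.map_const', Multiset.sum_replicate, hR,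
      okutsu_aux_roots_card FK hFKmon]
  have e2 : (R.map fun θ' => S.v (Polynomial.aeval θ' gK)).sum
      = (R.map fun θ' => (Rg.map fun ρ => S.v (θ' - ρ)).sum).sum :=
    congrArg Multiset.sum
      (Multiset.map_congr rfl fun θ' _ => okutsu_aux_eval_eq S gK hgmon θ')
  have e3 : (R.map fun θ' => (Rg.map fun ρ => S.v (θ' - ρ)).sum).sum
      = (Rg.map fun ρ => (R.map fun θ' => S.v (θ' - ρ)).sum).sum :=
    okutsu_aux_sum_swap R Rg _
  have e4 : (Rg.map fun ρ => (R.map fun θ' => S.v (θ' - ρ)).sum).sum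
      = (Rg.map fun ρ => S.v (Polynomial.aeval ρ FK)).sum := by
    refine congrArg Multiset.sum (Multiset.map_congr rfl fun ρ _ => ?_)
    rw [okutsu_aux_eval_eq S FK hFKmon ρ]
    exact congrArg Multiset.sum
      (Multiset.map_congr rfl fun θ' _ => okutsu_aux_v_sub_symm S θ' ρ)
  have e5 : (Rg.map fun ρ => S.v (Polynomial.aeval ρ FK)).sum
      = gK.natDegree • S.v (Polynomial.aeval γ FK) := by
    rw [Multiset.map_congr rfl hconst2, Multiset.map_const', Multiset.sum_replicate, hRg,
      okutsu_aux_roots_card gK hgmon]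
  rw [← e1, e2, e3, e4, e5]

end OkutsuAux3

open OkutsuSetup in
/-- Let `F ∈ 𝓞[x]` be monic irreducible with root `θ`, of depth `r`,
with Okutsu frame `[F_1, …, F_r]` and invariants `m_i, μ_i`.  Let `h ∈ 𝓞[x]` be monic
irreducible of degree `m` and `δ_F(h) = max {v(θ - β) | β a root of h}`.  Then, for any
`1 ≤ i ≤ r` (writing `v(F_i(θ))` as a rational number `c`):
(i) `δ_F(h) < μ_i → v(h(θ)) < (m/m_i)·v(F_i(θ))`;
(ii) `δ_F(h) = μ_i → v(h(θ)) = (m/m_i)·v(F_i(θ))`;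
(iii) `δ_F(h) > μ_i → v(h(θ)) > (m/m_i)·v(F_i(θ))`. -/
theorem okutsu_stmt_12 {K : Type} [Field K] [CharZero K] (S : OkutsuSetup K)
    (F : Polynomial S.integers) (hFmonic : F.Monic)
    (hFirr : Irreducible (F.map S.integers.subtype))
    (n : ℕ) (hFdeg : F.natDegree = n)
    (θ : AlgebraicClosure K) (hθ : S.evalK F θ = 0)
    (D : OkutsuData S θ n)
    (Fr : ℕ → Polynomial S.integers) (hFr : S.IsFrame D Fr)
    (h : Polynomial S.integers) (hhmonic : h.Monic)
    (hhirr : Irreducible (h.map S.integers.subtype))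
    (m : ℕ) (hhdeg : h.natDegree = m)
    (δ : WithTop ℚ)
    (hδ : IsGreatest {c : WithTop ℚ | ∃ β : AlgebraicClosure K,
      S.evalK h β = 0 ∧ c = S.v (θ - β)} δ)
    (i : ℕ) (hi1 : 1 ≤ i) (hi2 : i ≤ D.r) :
    ∀ c : ℚ, S.v (S.evalK (Fr i) θ) = (c : WithTop ℚ) →
      (δ < D.μ i →
        S.v (S.evalK h θ) < ((((m : ℚ) / (D.m i : ℚ)) * c : ℚ) : WithTop ℚ)) ∧
      (δ = D.μ i →
        S.v (S.evalK h θ) = ((((m : ℚ) / (D.m i : ℚ)) * c : ℚ) : WithTop ℚ)) ∧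
      (D.μ i < δ →
        ((((m : ℚ) / (D.m i : ℚ)) * c : ℚ) : WithTop ℚ) < S.v (S.evalK h θ)) := by
  classical
  intro c hc
  set FK : Polynomial K := F.map S.integers.subtype with hFKdef
  set hKp : Polynomial K := h.map S.integers.subtype with hhKdef
  set GK : Polynomial K := (Fr i).map S.integers.subtype with hGKdef
  have hθ0 : Polynomial.aeval θ FK = 0 := hθ
  replace hc : S.v (Polynomial.aeval θ GK) = (c : WithTop ℚ) := hc
  rw [show S.evalK h θ = Polynomial.aeval θ hKp from rfl]
  have hFKmon : FK.Monic := hFmonic.map _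
  have hKmon : hKp.Monic := hhmonic.map _
  have hFKdeg : FK.natDegree = n := by rw [hFKdef, hFmonic.natDegree_map, hFdeg]
  have hKdeg : hKp.natDegree = m := by rw [hhKdef, hhmonic.natDegree_map, hhdeg]
  have hminθ : minpoly K θ = FK := (minpoly.eq_of_irreducible_of_monic hFirr hθ0 hFKmon).symm
  obtain ⟨α, hαdeg, hαv, hGKeq⟩ := hFr i hi1 hi2
  rw [← hGKdef] at hGKeq
  have hαint : IsIntegral K α := (Algebra.IsAlgebraic.isAlgebraic α).isIntegral
  have hGKmon : GK.Monic := by rw [hGKeq]; exact minpoly.monic hαint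
  have hGKirr : Irreducible GK := by rw [hGKeq]; exact minpoly.irreducible hαint
  have hGKdeg : GK.natDegree = D.m i := by rw [hGKeq]; exact hαdeg
  have hα0 : Polynomial.aeval α GK = 0 := by rw [hGKeq]; exact minpoly.aeval K α
  have hmi_pos : 0 < D.m i := hαdeg ▸ minpoly.natDegree_pos hαint
  have hmi_lt : D.m i < n := D.m_lt_n i hi1 hi2
  have hn_pos : 0 < n := lt_trans hmi_pos hmi_lt
  have hθdeg : (minpoly K θ).natDegree = n := by rw [hminθ]; exact hFKdeg
  have hαθ : α ≠ θ := by
    intro he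
    rw [he, hθdeg] at hαdeg
    exact (Nat.ne_of_lt hmi_lt) hαdeg.symm
  have hμfin : D.μ i ≠ ⊤ := by
    rw [← hαv]
    exact okutsu_aux_v_ne_top S (sub_ne_zero_of_ne (Ne.symm hαθ))
  obtain ⟨β, hβroot, hδeq⟩ := hδ.1
  have hβ0 : Polynomial.aeval β hKp = 0 := hβroot
  have hminβ : minpoly K β = hKp := (minpoly.eq_of_irreducible_of_monic hhirr hβ0 hKmon).symm
  have hm_pos : 0 < m := by
    rw [← hKdeg, ← hminβ]
    exact minpoly.natDegree_pos (Algebra.IsAlgebraic.isAlgebraic β).isIntegral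
  have hvθα : S.v (θ - α) = D.μ i := hαv
  have hvθβ : S.v (θ - β) = δ := hδeq.symm
  have hvαθ : S.v (α - θ) = D.μ i := by rw [okutsu_aux_v_sub_symm]; exact hαv
  by_cases hhθ : Polynomial.aeval θ hKp = 0
  · have hδtop : δ = ⊤ := by
      refine top_le_iff.mp (hδ.2 ⟨θ, hhθ, ?_⟩)
      rw [sub_self, okutsu_aux_v_zero]
    refine ⟨?_, ?_, ?_⟩
    · intro hlt; rw [hδtop] at hlt; exact absurd hlt not_top_lt
    · intro heq; exact absurd (by rw [← heq, hδtop]) hμfin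
    · intro _
      rw [(S.v_eq_top_iff _).mpr hhθ]
      exact WithTop.coe_lt_top _
  · have hvh_ne : S.v (Polynomial.aeval θ hKp) ≠ ⊤ := okutsu_aux_v_ne_top S hhθ
    set R := (FK.map (algebraMap K (AlgebraicClosure K))).roots with hRdef
    have hθR : θ ∈ R := okutsu_aux_mem_roots FK hFKmon θ hθ0
    have master : ∀ θ' ∈ R, ∃ a b : AlgebraicClosure K,
        S.v (θ' - α) = S.v (θ - a) ∧ S.v (θ' - β) = S.v (θ - b) ∧
        S.v (a - b) = S.v (α - β) ∧ S.v (θ - a) ≤ D.μ i ∧ S.v (θ - b) ≤ δ := by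
      intro θ' hθ'
      obtain ⟨σ, hσ⟩ := okutsu_aux_conj θ θ'
        (by rw [hminθ]; exact okutsu_aux_root_aeval FK hθ')
      refine ⟨σ.symm α, σ.symm β, ?_, ?_, ?_, ?_, ?_⟩
      · rw [← okutsu_aux_v_aut S σ (θ - σ.symm α), map_sub, hσ, σ.apply_symm_apply]
      · rw [← okutsu_aux_v_aut S σ (θ - σ.symm β), map_sub, hσ, σ.apply_symm_apply]
      · rw [← map_sub, okutsu_aux_v_aut]
      · exact (D.mu_isGreatest i hi1 (hi2.trans (Nat.le_succ _))).2
          ⟨σ.symm α, by rw [minpoly.algEquiv_eq σ.symm α]; exact hαdeg, rfl⟩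
      · refine hδ.2 ⟨σ.symm β, ?_, rfl⟩
        show Polynomial.aeval (σ.symm β) hKp = 0
        rw [Polynomial.aeval_algHom_apply σ.symm β, hβ0, map_zero]
    have hfin_α : ∀ θ' ∈ R, S.v (θ' - α) ≠ ⊤ := by
      intro θ' hθ'
      apply okutsu_aux_v_ne_top
      intro hsub
      have he : θ' = α := sub_eq_zero.mp hsub
      have h0 : Polynomial.aeval α FK = 0 := he ▸ okutsu_aux_root_aeval FK hθ'
      have hmin2 : minpoly K α = FK := (minpoly.eq_of_irreducible_of_monic hFirr h0 hFKmon).symm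
      rw [hmin2, hFKdeg] at hαdeg
      exact (Nat.ne_of_lt hmi_lt) hαdeg.symm
    have hfin_β : ∀ θ' ∈ R, S.v (θ' - β) ≠ ⊤ := by
      intro θ' hθ'
      apply okutsu_aux_v_ne_top
      intro hsub
      have he : θ' = β := sub_eq_zero.mp hsub
      have h0 : Polynomial.aeval β FK = 0 := he ▸ okutsu_aux_root_aeval FK hθ'
      have hmin2 : minpoly K β = FK := (minpoly.eq_of_irreducible_of_monic hFirr h0 hFKmon).symm
      have : hKp = FK := by rw [← hminβ, hmin2]
      exact hhθ (this ▸ hθ0)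
    have I1 : n • S.v (Polynomial.aeval θ hKp) = m • S.v (Polynomial.aeval β FK) := by
      have := okutsu_aux_res S FK hFKmon θ hminθ hKp hKmon hhirr β hβ0
      rwa [hFKdeg, hKdeg] at this
    have I2 : n • ((c : ℚ) : WithTop ℚ) = (D.m i) • S.v (Polynomial.aeval α FK) := by
      have := okutsu_aux_res S FK hFKmon θ hminθ GK hGKmon hGKirr α hα0
      rwa [hFKdeg, hGKdeg, hc] at this
    have hYeq : S.v (Polynomial.aeval β FK) = (R.map fun θ' => S.v (θ' - β)).sum := by
      rw [okutsu_aux_eval_eq S FK hFKmon β]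
      exact congrArg Multiset.sum
        (Multiset.map_congr rfl fun θ' _ => okutsu_aux_v_sub_symm S β θ')
    have hZeq : S.v (Polynomial.aeval α FK) = (R.map fun θ' => S.v (θ' - α)).sum := by
      rw [okutsu_aux_eval_eq S FK hFKmon α]
      exact congrArg Multiset.sum
        (Multiset.map_congr rfl fun θ' _ => okutsu_aux_v_sub_symm S α θ')
    obtain ⟨qX, hqX⟩ := WithTop.ne_top_iff_exists.mp hvh_ne
    have hYfin : S.v (Polynomial.aeval β FK) ≠ ⊤ := by
      rw [hYeq]; exact okutsu_aux_sum_ne_top R _ hfin_β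
    have hZfin : S.v (Polynomial.aeval α FK) ≠ ⊤ := by
      rw [hZeq]; exact okutsu_aux_sum_ne_top R _ hfin_α
    obtain ⟨qY, hqY⟩ := WithTop.ne_top_iff_exists.mp hYfin
    obtain ⟨qZ, hqZ⟩ := WithTop.ne_top_iff_exists.mp hZfin
    have E1 : (n : ℚ) * qX = (m : ℚ) * qY := by
      have := I1
      rw [← hqX, ← hqY, okutsu_aux_nsmul, okutsu_aux_nsmul] at this
      have := WithTop.coe_inj.mp this
      simpa [nsmul_eq_mul] using this
    have E2 : (n : ℚ) * c = (D.m i : ℚ) * qZ := by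
      have := I2
      rw [← hqZ, okutsu_aux_nsmul, okutsu_aux_nsmul] at this
      have := WithTop.coe_inj.mp this
      simpa [nsmul_eq_mul] using this
    have hn0 : (n : ℚ) ≠ 0 := Nat.cast_ne_zero.mpr hn_pos.ne'
    have hmi0 : (0 : ℚ) < (D.m i : ℚ) := Nat.cast_pos.mpr hmi_pos
    have hm0 : (0 : ℚ) < (m : ℚ) := Nat.cast_pos.mpr hm_pos
    have hnq : (0 : ℚ) < (n : ℚ) := Nat.cast_pos.mpr hn_pos
    refine ⟨?_, ?_, ?_⟩
    · -- case (i) : δ < μ i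
      intro hlt
      have hwδ : S.v (α - β) = δ := by
        have h1 : S.v (θ - β) < S.v (α - θ) := by rw [hvθβ, hvαθ]; exact hlt
        have hr : (θ - β) + (α - θ) = α - β := by ring
        have := okutsu_aux_v_add_eq S (θ - β) (α - θ) h1
        rw [hr] at this
        rw [this, hvθβ]
      have hpt_le : ∀ θ' ∈ R, S.v (θ' - β) ≤ S.v (θ' - α) := by
        intro θ' hθ'
        obtain ⟨a, b, hA, hB, hC, hUa, hUb⟩ := master θ' hθ'
        rw [hA, hB]
        rcases lt_or_eq_of_le hUb with h1 | h1
        · have hvba : S.v (b - a) = δ := by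
            rw [okutsu_aux_v_sub_symm, hC, hwδ]
          have hlt2 : S.v (θ - b) < S.v (b - a) := by rw [hvba]; exact h1
          have := okutsu_aux_v_add_eq S (θ - b) (b - a) hlt2
          rw [sub_add_sub_cancel] at this
          exact this.symm.le
        · have htr := okutsu_aux_triangle S θ b a
          have hmin : δ ≤ min (S.v (θ - b)) (S.v (b - a)) := by
            refine le_min h1.ge ?_
            rw [okutsu_aux_v_sub_symm, hC, hwδ]
          exact h1.le.trans (hmin.trans htr)
      have hstrict : S.v (θ - β) < S.v (θ - α) := by rw [hvθβ, hvθα]; exact hlt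
      have hsum := okutsu_aux_sum_lt R (fun θ' => S.v (θ' - β)) (fun θ' => S.v (θ' - α))
        θ hθR hstrict hpt_le hfin_β
      have hYZ : qY < qZ := by
        rw [← WithTop.coe_lt_coe, hqY, hqZ, hYeq, hZeq]
        exact hsum
      rw [← hqX, WithTop.coe_lt_coe, div_mul_eq_mul_div, lt_div_iff₀ hmi0]
      have t3 : (n : ℚ) * (qX * (D.m i : ℚ)) < (n : ℚ) * ((m : ℚ) * c) := by
        have l1 : (n : ℚ) * (qX * (D.m i : ℚ)) = (m : ℚ) * ((D.m i : ℚ) * qY) := by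
          linear_combination (D.m i : ℚ) * E1
        have l2 : (n : ℚ) * ((m : ℚ) * c) = (m : ℚ) * ((D.m i : ℚ) * qZ) := by
          linear_combination (m : ℚ) * E2
        rw [l1, l2]
        exact mul_lt_mul_of_pos_left (mul_lt_mul_of_pos_left hYZ hmi0) hm0
      exact lt_of_mul_lt_mul_left t3 hnq.le
    · -- case (ii) : δ = μ i
      intro heq
      have hw : D.μ i ≤ S.v (α - β) := by
        have htr := okutsu_aux_triangle S α θ β
        rw [hvαθ, hvθβ, heq, min_self] at htr
        exact htr
      have hpt : ∀ θ' ∈ R, S.v (θ' - β) = S.v (θ' - α) := by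
        intro θ' hθ'
        obtain ⟨a, b, hA, hB, hC, hUa, hUb⟩ := master θ' hθ'
        rw [hA, hB]
        rcases lt_or_eq_of_le hUa with h1 | h1
        · have hlt2 : S.v (θ - a) < S.v (a - b) := by
            rw [hC]; exact h1.trans_le hw
          have := okutsu_aux_v_add_eq S (θ - a) (a - b) hlt2
          rw [sub_add_sub_cancel] at this
          exact this
        · refine le_antisymm ?_ ?_
          · rw [h1, ← heq]; exact hUb
          · have htr := okutsu_aux_triangle S θ a b
            have hmin : D.μ i ≤ min (S.v (θ - a)) (S.v (a - b)) := by
              refine le_min h1.ge ?_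
              rw [hC]; exact hw
            exact h1.le.trans (hmin.trans htr)
      have hsum : (R.map fun θ' => S.v (θ' - β)).sum = (R.map fun θ' => S.v (θ' - α)).sum :=
        congrArg Multiset.sum (Multiset.map_congr rfl hpt)
      have hYZ : qY = qZ := by
        rw [← WithTop.coe_inj, hqY, hqZ, hYeq, hZeq]
        exact hsum
      rw [← hqX]
      refine WithTop.coe_inj.mpr ?_
      rw [div_mul_eq_mul_div, eq_div_iff hmi0.ne']
      have P : (n : ℚ) * (qX * (D.m i : ℚ)) = (n : ℚ) * ((m : ℚ) * c) := by
        linear_combination (D.m i : ℚ) * E1 + (m : ℚ) * (D.m i : ℚ) * hYZ - (m : ℚ) * E2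
      exact mul_left_cancel₀ hn0 P
    · -- case (iii) : μ i < δ
      intro hlt
      have hwμ : S.v (α - β) = D.μ i := by
        have h1 : S.v (α - θ) < S.v (θ - β) := by rw [hvθβ, hvαθ]; exact hlt
        have hr : (α - θ) + (θ - β) = α - β := by ring
        have := okutsu_aux_v_add_eq S (α - θ) (θ - β) h1
        rw [hr] at this
        rw [this, hvαθ]
      have hpt_le : ∀ θ' ∈ R, S.v (θ' - α) ≤ S.v (θ' - β) := by
        intro θ' hθ'
        obtain ⟨a, b, hA, hB, hC, hUa, hUb⟩ := master θ' hθ'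
        rw [hA, hB]
        rcases lt_or_eq_of_le hUa with h1 | h1
        · have hlt2 : S.v (θ - a) < S.v (a - b) := by
            rw [hC, hwμ]; exact h1
          have := okutsu_aux_v_add_eq S (θ - a) (a - b) hlt2
          rw [sub_add_sub_cancel] at this
          exact this.ge
        · have htr := okutsu_aux_triangle S θ a b
          have hmin : D.μ i ≤ min (S.v (θ - a)) (S.v (a - b)) := by
            refine le_min h1.ge ?_
            rw [hC, hwμ]
          exact h1.le.trans (hmin.trans htr)
      have hstrict : S.v (θ - α) < S.v (θ - β) := by rw [hvθβ, hvθα]; exact hlt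
      have hsum := okutsu_aux_sum_lt R (fun θ' => S.v (θ' - α)) (fun θ' => S.v (θ' - β))
        θ hθR hstrict hpt_le hfin_α
      have hYZ : qZ < qY := by
        rw [← WithTop.coe_lt_coe, hqY, hqZ, hYeq, hZeq]
        exact hsum
      rw [← hqX, WithTop.coe_lt_coe, div_mul_eq_mul_div, div_lt_iff₀ hmi0]
      have t3 : (n : ℚ) * ((m : ℚ) * c) < (n : ℚ) * (qX * (D.m i : ℚ)) := by
        have l1 : (n : ℚ) * (qX * (D.m i : ℚ)) = (m : ℚ) * ((D.m i : ℚ) * qY) := by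
          linear_combination (D.m i : ℚ) * E1
        have l2 : (n : ℚ) * ((m : ℚ) * c) = (m : ℚ) * ((D.m i : ℚ) * qZ) := by
          linear_combination (m : ℚ) * E2
        rw [l1, l2]
        exact mul_lt_mul_of_pos_left (mul_lt_mul_of_pos_left hYZ hmi0) hm0
      exact lt_of_mul_lt_mul_left t3 hnq.le
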